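/- Let n ≥ 2 be an even integer. There exist a constant c > 0 and a positive integer N ≥ 3 such that for all integers k, p with |k| ≥ N and p ∉ {k, −k}, and for all real t with |t| < 1/ln|k|, one has |(2πk + t)^n − (2πp + t)^n| > c (ln|k|)^{−1} (||k| − |p|| + 1)(|k| + |p|)^{n−1}. -/

import Mathlib

open Real

lemma min_le_abs_abs_sub_abs (a b : ℝ) : min |a - b| |a + b| ≤ |(|a| - |b|)| := by
  rcases abs_cases a with ⟨ha, _⟩ | ⟨ha, _⟩ <;> rcases abs_cases b with ⟨hb, _⟩ | ⟨hb, _⟩ <;>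
      rw [ha, hb]
  · exact min_le_left _ _
  · rw [sub_neg_eq_add]; exact min_le_right _ _
  · rw [show -a - b = -(a + b) by ring, abs_neg]; exact min_le_right _ _
  · rw [show -a - -b = -(a - b) by ring, abs_neg]; exact min_le_left _ _

lemma sub_mul_pow_le (A B : ℝ) (hB : 0 ≤ B) (h : B ≤ A) (j : ℕ) :
    (A - B) * A ^ j ≤ A ^ (j + 1) - B ^ (j + 1) := by
  have h1 : B ^ j ≤ A ^ j := pow_le_pow_left₀ hB h j
  have hid : A ^ (j + 1) - B ^ (j + 1) - (A - B) * A ^ j = B * (A ^ j - B ^ j) := by ring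
  have h2 : 0 ≤ B * (A ^ j - B ^ j) := mul_nonneg hB (sub_nonneg.mpr h1)
  linarith

lemma abs_sub_mul_max_pow_le (A B : ℝ) (hA : 0 ≤ A) (hB : 0 ≤ B) (j : ℕ) :
    |A - B| * max A B ^ j ≤ |A ^ (j + 1) - B ^ (j + 1)| := by
  rcases le_total B A with h | h
  · rw [abs_of_nonneg (sub_nonneg.mpr h), max_eq_left h,
      abs_of_nonneg (sub_nonneg.mpr (pow_le_pow_left₀ hB h _))]
    exact sub_mul_pow_le A B hB h j
  · rw [abs_sub_comm, abs_of_nonneg (sub_nonneg.mpr h), max_eq_right h,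
      abs_sub_comm (A ^ (j + 1)),
      abs_of_nonneg (sub_nonneg.mpr (pow_le_pow_left₀ hA h _))]
    exact sub_mul_pow_le B A hA h j

/-- Let `n ≥ 2` be an even integer. There exist a constant `c > 0` and a
positive integer `N ≥ 3` such that for all integers `k, p` with `|k| ≥ N` and
`p ∉ {k, −k}`, and for all real `t` with `|t| < 1/ln|k|`, one has
`|(2πk + t)^n − (2πp + t)^n| > c (ln|k|)⁻¹ (||k| − |p|| + 1)(|k| + |p|)^{n−1}`. -/
theorem stmt_2 (n : ℕ) (hn : 2 ≤ n) (heven : Even n) :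
    ∃ c : ℝ, 0 < c ∧ ∃ N : ℕ, 3 ≤ N ∧
      ∀ k p : ℤ, (N : ℤ) ≤ |k| → p ∉ ({k, -k} : Set ℤ) →
        ∀ t : ℝ, |t| < (Real.log |(k:ℝ)|)⁻¹ →
          |(2*π*(k:ℝ) + t)^n - (2*π*(p:ℝ) + t)^n| >
            c * (Real.log |(k:ℝ)|)⁻¹ * (|(|(k:ℝ)| - |(p:ℝ)|)| + 1)
              * (|(k:ℝ)| + |(p:ℝ)|)^(n-1) := by
  refine ⟨1, one_pos, 3, le_refl 3, ?_⟩
  intro k p hk hp t ht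
  simp only [Set.mem_insert_iff, Set.mem_singleton_iff, not_or] at hp
  obtain ⟨hpk, hpk'⟩ := hp
  have hπ : (3 : ℝ) < π := Real.pi_gt_three
  -- basic cast facts
  have hK3 : (3 : ℝ) ≤ |(k : ℝ)| := by
    have := (Int.cast_le (R := ℝ)).mpr hk
    push_cast at this
    exact this
  set K := |(k : ℝ)| with hKdef
  set P := |(p : ℝ)| with hPdef
  have hP0 : 0 ≤ P := abs_nonneg _
  -- log bounds
  have hlog1 : 1 < Real.log K := by
    have h3 : Real.exp 1 < 3 := by
      have := Real.exp_one_lt_d9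
      linarith
    calc (1 : ℝ) = Real.log (Real.exp 1) := (Real.log_exp 1).symm
      _ < Real.log 3 := Real.log_lt_log (Real.exp_pos 1) h3
      _ ≤ Real.log K := Real.log_le_log (by norm_num) hK3
  have hloginv1 : (Real.log K)⁻¹ < 1 := by
    rw [inv_lt_one_iff₀]
    right; exact hlog1
  have hloginv0 : 0 < (Real.log K)⁻¹ := inv_pos.mpr (by linarith)
  have ht1 : |t| < 1 := ht.trans hloginv1
  have ht0 : 0 ≤ |t| := abs_nonneg t
  -- the two numbers
  set a := 2 * π * (k : ℝ) + t with hadef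
  set b := 2 * π * (p : ℝ) + t with hbdef
  set m := |K - P| with hmdef
  have hm0 : 0 ≤ m := abs_nonneg _
  -- integer separation facts
  have hkp1 : (1 : ℝ) ≤ |(k : ℝ) - (p : ℝ)| := by
    have h1 : k - p ≠ 0 := sub_ne_zero.mpr (fun h => hpk h.symm)
    have h2 : (1 : ℤ) ≤ |k - p| := Int.one_le_abs h1
    have := (Int.cast_le (R := ℝ)).mpr h2
    push_cast at this
    exact this
  have hkp2 : (1 : ℝ) ≤ |(k : ℝ) + (p : ℝ)| := by
    have h1 : k + p ≠ 0 := by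
      intro h
      exact hpk' (by omega)
    have h2 : (1 : ℤ) ≤ |k + p| := Int.one_le_abs h1
    have := (Int.cast_le (R := ℝ)).mpr h2
    push_cast at this
    exact this
  have hm1 : m ≤ |(k : ℝ) - (p : ℝ)| := abs_abs_sub_abs_le_abs_sub _ _
  have hm2 : m ≤ |(k : ℝ) + (p : ℝ)| := by
    have := abs_abs_sub_abs_le_abs_sub (k : ℝ) (-(p : ℝ))
    simpa [sub_neg_eq_add] using this
  -- lower bound on |a - b|
  have hab1 : π * (m + 1) ≤ |a - b| := by
    have : a - b = 2 * π * ((k : ℝ) - (p : ℝ)) := by rw [hadef, hbdef]; ring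
    rw [this, abs_mul, abs_of_pos (by positivity : (0 : ℝ) < 2 * π)]
    nlinarith [Real.pi_pos]
  -- lower bound on |a + b|
  have hab2 : π * (m + 1) - 2 ≤ |a + b| := by
    have he : a + b = 2 * π * ((k : ℝ) + (p : ℝ)) + 2 * t := by rw [hadef, hbdef]; ring
    have h1 : |2 * π * ((k : ℝ) + (p : ℝ))| ≤ |a + b| + |2 * t| := by
      calc |2 * π * ((k : ℝ) + (p : ℝ))| = |(a + b) + (-(2 * t))| := by rw [he]; ring_nf
        _ ≤ |a + b| + |(-(2 * t))| := abs_add_le _ _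
        _ = |a + b| + |2 * t| := by rw [abs_neg]
    have h2 : |2 * π * ((k : ℝ) + (p : ℝ))| = 2 * π * |(k : ℝ) + (p : ℝ)| := by
      rw [abs_mul, abs_of_pos (by positivity : (0 : ℝ) < 2 * π)]
    have h3 : |2 * t| = 2 * |t| := by rw [abs_mul]; norm_num
    nlinarith [Real.pi_pos]
  -- lower bound on |(|a| - |b|)|
  have hD : m + 1 ≤ |(|a| - |b|)| := by
    have hmin := min_le_abs_abs_sub_abs a b
    have h1 : m + 1 ≤ min |a - b| |a + b| := by
      refine le_min ?_ ?_
      · nlinarith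
      · nlinarith
    linarith
  -- lower bounds on |a|, |b|
  have hA_lb : 2 * π * K - 1 ≤ |a| := by
    have h1 : |2 * π * (k : ℝ)| ≤ |a| + |t| := by
      calc |2 * π * (k : ℝ)| = |a + (-t)| := by rw [hadef]; ring_nf
        _ ≤ |a| + |(-t)| := abs_add_le _ _
        _ = |a| + |t| := by rw [abs_neg]
    have h2 : |2 * π * (k : ℝ)| = 2 * π * K := by
      rw [abs_mul, abs_of_pos (by positivity : (0 : ℝ) < 2 * π)]
    linarith
  have hB_lb : 2 * π * P - 1 ≤ |b| := by
    have h1 : |2 * π * (p : ℝ)| ≤ |b| + |t| := by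
      calc |2 * π * (p : ℝ)| = |b + (-t)| := by rw [hbdef]; ring_nf
        _ ≤ |b| + |(-t)| := abs_add_le _ _
        _ = |b| + |t| := by rw [abs_neg]
    have h2 : |2 * π * (p : ℝ)| = 2 * π * P := by
      rw [abs_mul, abs_of_pos (by positivity : (0 : ℝ) < 2 * π)]
    linarith
  -- lower bound on max
  have hS : K + P ≤ max |a| |b| := by
    have h1 : (|a| + |b|) / 2 ≤ max |a| |b| := by
      rcases le_total |a| |b| with h | h
      · rw [max_eq_right h]; linarith
      · rw [max_eq_left h]; linarith
    have h4 : (3 : ℝ) * (K + P) ≤ π * (K + P) :=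
      mul_le_mul_of_nonneg_right (le_of_lt hπ) (by linarith)
    linarith
  have hKP0 : 0 ≤ K + P := by linarith
  have hSpow : (K + P) ^ (n - 1) ≤ max |a| |b| ^ (n - 1) :=
    pow_le_pow_left₀ hKP0 hS _
  -- main estimate
  have hj : n - 1 + 1 = n := by omega
  have hkey : |(|a| - |b|)| * max |a| |b| ^ (n - 1) ≤ |(|a| ^ n - |b| ^ n)| := by
    have := abs_sub_mul_max_pow_le |a| |b| (abs_nonneg a) (abs_nonneg b) (n - 1)
    rwa [hj] at this
  have heq : |a ^ n - b ^ n| = |(|a| ^ n - |b| ^ n)| := by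
    rw [heven.pow_abs a, heven.pow_abs b]
  have hKPpow_pos : 0 < (K + P) ^ (n - 1) := by positivity
  have hSpow_nonneg : 0 ≤ max |a| |b| ^ (n - 1) := by positivity
  -- combine
  rw [gt_iff_lt, heq]
  calc 1 * (Real.log K)⁻¹ * (m + 1) * (K + P) ^ (n - 1)
      < 1 * (m + 1) * (K + P) ^ (n - 1) := by
        rw [one_mul, one_mul]
        apply mul_lt_mul_of_pos_right _ hKPpow_pos
        have h5 : (Real.log K)⁻¹ * (m + 1) < 1 * (m + 1) :=
          mul_lt_mul_of_pos_right hloginv1 (by linarith)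
        linarith
    _ ≤ |(|a| - |b|)| * (K + P) ^ (n - 1) := by
        rw [one_mul]
        exact mul_le_mul_of_nonneg_right hD (le_of_lt hKPpow_pos)
    _ ≤ |(|a| - |b|)| * max |a| |b| ^ (n - 1) :=
        mul_le_mul_of_nonneg_left hSpow (abs_nonneg _)
    _ ≤ |(|a| ^ n - |b| ^ n)| := hkey
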